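/- For every positive integer k, α_k(K_2 □ C_{2k+1}) = 2 = min(α_k(K_2) · |V(C_{2k+1})|, α_k(C_{2k+1}) · |V(K_2)|), i.e., the upper bound α_k(G1 □ G2) ≤ min(α_k(G1)·|V(G2)|, α_k(G2)·|V(G1)|) is attained with G1 = K_2 and G2 = C_{2k+1}. -/

import Mathlib

open SimpleGraph
open Fin.CommRing

/-- The `k`-independence number: the maximum size of a set of vertices at pairwise
distance greater than `k`. -/
noncomputable def kIndepNum {V : Type*} [Fintype V] (G : SimpleGraph V) (k : ℕ) : ℕ :=
  sSup {n | ∃ s : Finset V, s.card = n ∧ ∀ u ∈ s, ∀ v ∈ s, u ≠ v → (k : ℕ∞) < G.edist u v}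


lemma neg_val_fact {n : ℕ} (a : Fin n) : a.val + (-a).val = 0 ∨ a.val + (-a).val = n := by
  haveI : NeZero n := ⟨a.pos.ne'⟩
  have h0 : ((a + -a : Fin n)).val = ((0 : Fin n)).val := by rw [add_neg_cancel]
  rw [Fin.val_add_eq_ite] at h0
  have h1 : (0 : Fin n).val = 0 := rfl
  have := a.isLt
  have := (-a).isLt
  split at h0 <;> omega

lemma fmin_step {n : ℕ} (a s : Fin n) (hs : s.val = 1 ∨ (-s).val = 1) :
    min (a + s).val (-(a + s)).val ≤ min a.val (-a).val + 1 := by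
  have h1 := neg_val_fact a
  have h2 := neg_val_fact s
  have h3 := neg_val_fact (a + s)
  have h4 : (a + s).val = a.val + s.val ∨ (a + s).val + n = a.val + s.val := by
    rw [Fin.val_add_eq_ite]; split <;> omega
  have ha := a.isLt
  have hs' := s.isLt
  have has := (a + s).isLt
  have hna := (-a).isLt
  have hns := (-s).isLt
  have hnas := (-(a+s)).isLt
  omega

/-- lower bound on walk lengths in a cycle graph -/
lemma cycle_walk_le {n : ℕ} {u v : Fin n} (w : (cycleGraph n).Walk u v) :
    min (v - u).val (-(v - u)).val ≤ w.length := by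
  haveI : NeZero n := ⟨u.pos.ne'⟩
  induction w with
  | nil => simp [sub_self]
  | @cons a z c h p ih =>
      rw [Walk.length_cons]
      have hs : (z - a).val = 1 ∨ (-(z - a)).val = 1 := by
        rw [cycleGraph_adj'] at h
        rcases h with h | h
        · right
          have hne : -(z - a) = a - z := by ring
          rw [hne]; exact h
        · left; exact h

      have hce : c - a = (c - z) + (z - a) := by ring
      calc min (c - a).val (-(c - a)).val
          = min ((c - z) + (z - a)).val (-((c - z) + (z - a))).val := by rw [hce]
        _ ≤ min (c - z).val (-(c - z)).val + 1 := fmin_step _ _ hs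
        _ ≤ p.length + 1 := by omega

/-- cycle edist upper bound: adding one step -/
lemma cycle_adj_succ {n : ℕ} [NeZero n] (hn : 2 ≤ n) (u : Fin n) : (cycleGraph n).Adj u (u + 1) := by
  rw [cycleGraph_adj']
  right
  have h : (u + 1 - u) = 1 := by ring
  rw [h]
  have h2 : (1 : Fin n).val = 1 % n := Fin.val_one' n
  rw [h2, Nat.mod_eq_of_lt (by omega)]

lemma cycle_edist_le {n : ℕ} [NeZero n] (hn : 2 ≤ n) (u : Fin n) (m : ℕ) :
    (cycleGraph n).edist u (u + (m : Fin n)) ≤ (m : ℕ∞) := by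
  induction m with
  | zero => simp
  | succ m ih =>
      have hadj := cycle_adj_succ hn (u + (m : Fin n))
      have h1 : (cycleGraph n).edist (u + (m : Fin n)) (u + (m : Fin n) + 1) = 1 :=
        edist_eq_one_iff_adj.mpr hadj
      have h2 : (u + ((m + 1 : ℕ) : Fin n)) = u + (m : Fin n) + 1 := by push_cast; ring
      rw [h2]
      calc (cycleGraph n).edist u (u + (m : Fin n) + 1)
          ≤ (cycleGraph n).edist u (u + (m : Fin n)) +
            (cycleGraph n).edist (u + (m : Fin n)) (u + (m : Fin n) + 1) :=
            SimpleGraph.edist_triangle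
        _ ≤ (m : ℕ∞) + 1 := by rw [h1]; exact add_le_add_left ih 1
        _ = ((m + 1 : ℕ) : ℕ∞) := by push_cast; ring

lemma cycle_edist_le_k {k : ℕ} (hk : 0 < k) (u v : Fin (2 * k + 1)) :
    (cycleGraph (2 * k + 1)).edist u v ≤ k := by
  have hn : 2 ≤ 2 * k + 1 := by omega
  have h1 : (cycleGraph (2 * k + 1)).edist u v ≤ ((v - u).val : ℕ∞) := by
    have := cycle_edist_le hn u (v - u).val
    rwa [Fin.cast_val_eq_self, add_sub_cancel] at this
  have h2 : (cycleGraph (2 * k + 1)).edist v u ≤ ((u - v).val : ℕ∞) := by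
    have := cycle_edist_le hn v (u - v).val
    rwa [Fin.cast_val_eq_self, add_sub_cancel] at this
  have h3 : (v - u).val + (u - v).val = 0 ∨ (v - u).val + (u - v).val = 2 * k + 1 := by
    have := neg_val_fact (v - u)
    rwa [neg_sub] at this
  rcases le_or_gt (v - u).val k with h | h
  · exact h1.trans (by exact_mod_cast Nat.cast_le.mpr h)
  · have : (u - v).val ≤ k := by omega
    rw [SimpleGraph.edist_comm]
    exact h2.trans (by exact_mod_cast Nat.cast_le.mpr this)

lemma cycle_edist_ge {k : ℕ} (hk : 0 < k) :
    (k : ℕ∞) ≤ (cycleGraph (2 * k + 1)).edist (0 : Fin (2 * k + 1)) ⟨k, by omega⟩ := by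
  rw [edist_eq_sInf]
  apply le_sInf
  rintro x ⟨w, rfl⟩
  have := cycle_walk_le w
  have hval : ((⟨k, by omega⟩ - 0 : Fin (2 * k + 1))).val = k := by
    simp
  have hneg := neg_val_fact ((⟨k, by omega⟩ - 0 : Fin (2 * k + 1)))
  have hlen : k ≤ w.length := by omega
  show (k : ℕ∞) ≤ (w.length : ℕ∞)
  exact_mod_cast hlen

lemma boxProd_walk_le {α β : Type*} {G : SimpleGraph α} {H : SimpleGraph β}
    {x y : α × β} (w : (G □ H).Walk x y) :
    G.edist x.1 y.1 + H.edist x.2 y.2 ≤ w.length := by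
  induction w with
  | nil => simp
  | @cons a z c h p ih =>
      rw [Walk.length_cons]
      rw [boxProd_adj] at h
      push_cast
      rcases h with ⟨h1, h2⟩ | ⟨h1, h2⟩
      · have : G.edist a.1 c.1 ≤ 1 + G.edist z.1 c.1 := by
          have := SimpleGraph.edist_triangle (G := G) (u := a.1) (v := z.1) (w := c.1)
          rwa [edist_eq_one_iff_adj.mpr h1] at this
        calc G.edist a.1 c.1 + H.edist a.2 c.2
            ≤ (1 + G.edist z.1 c.1) + H.edist z.2 c.2 := by rw [← h2]; exact add_le_add_left this _
          _ = (G.edist z.1 c.1 + H.edist z.2 c.2) + 1 := by ring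
          _ ≤ p.length + 1 := add_le_add_left ih 1
      · have : H.edist a.2 c.2 ≤ 1 + H.edist z.2 c.2 := by
          have := SimpleGraph.edist_triangle (G := H) (u := a.2) (v := z.2) (w := c.2)
          rwa [edist_eq_one_iff_adj.mpr h1] at this
        calc G.edist a.1 c.1 + H.edist a.2 c.2
            ≤ G.edist z.1 c.1 + (1 + H.edist z.2 c.2) := by rw [← h2]; exact add_le_add_right this _
          _ = (G.edist z.1 c.1 + H.edist z.2 c.2) + 1 := by ring
          _ ≤ p.length + 1 := add_le_add_left ih 1

lemma boxProd_edist_ge {α β : Type*} {G : SimpleGraph α} {H : SimpleGraph β}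
    (x y : α × β) : G.edist x.1 y.1 + H.edist x.2 y.2 ≤ (G □ H).edist x y := by
  rw [edist_eq_sInf]
  apply le_sInf
  rintro _ ⟨w, rfl⟩
  exact boxProd_walk_le w

lemma boxProd_edist_right_le {α β : Type*} {G : SimpleGraph α} {H : SimpleGraph β}
    (a : α) (v w : β) (h : H.Reachable v w) :
    (G □ H).edist (a, v) (a, w) ≤ H.edist v w := by
  obtain ⟨p, hp⟩ := h.exists_walk_length_eq_edist
  calc (G □ H).edist (a, v) (a, w) ≤ ((p.boxProdRight G a).length : ℕ∞) := edist_le _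
    _ = (p.length : ℕ∞) := by exact congrArg _ (Walk.length_map _ p)
    _ = H.edist v w := by exact_mod_cast hp

lemma kIndepNum_K2 (k : ℕ) (hk : 0 < k) : kIndepNum (completeGraph (Fin 2)) k = 1 := by
  apply IsGreatest.csSup_eq
  constructor
  · refine ⟨{0}, by simp, ?_⟩
    intro u hu v hv huv
    simp only [Finset.mem_singleton] at hu hv
    exact absurd (hu.trans hv.symm) huv
  · rintro n ⟨s, rfl, hs⟩
    by_contra h
    push_neg at h
    obtain ⟨u, hu, v, hv, huv⟩ := Finset.one_lt_card.mp h
    have hlt := hs u hu v hv huv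
    have hadj : (completeGraph (Fin 2)).Adj u v := huv
    rw [edist_eq_one_iff_adj.mpr hadj] at hlt
    have : (1 : ℕ∞) ≤ k := by exact_mod_cast hk
    exact absurd (hlt.trans_le this) (lt_irrefl _)

lemma kIndepNum_cycle (k : ℕ) (hk : 0 < k) : kIndepNum (cycleGraph (2 * k + 1)) k = 1 := by
  apply IsGreatest.csSup_eq
  constructor
  · refine ⟨{0}, by simp, ?_⟩
    intro u hu v hv huv
    simp only [Finset.mem_singleton] at hu hv
    exact absurd (hu.trans hv.symm) huv
  · rintro n ⟨s, rfl, hs⟩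
    by_contra h
    push_neg at h
    obtain ⟨u, hu, v, hv, huv⟩ := Finset.one_lt_card.mp h
    have hlt := hs u hu v hv huv
    exact absurd (hlt.trans_le (cycle_edist_le_k hk u v)) (lt_irrefl _)

lemma kIndepNum_box (k : ℕ) (hk : 0 < k) :
    kIndepNum (completeGraph (Fin 2) □ cycleGraph (2 * k + 1)) k = 2 := by
  set x : Fin 2 × Fin (2 * k + 1) := (0, 0) with hx
  set y : Fin 2 × Fin (2 * k + 1) := (1, ⟨k, by omega⟩) with hy
  have hxy : x ≠ y := by
    simp [hx, hy, Prod.ext_iff]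
  have hkey : (k : ℕ∞) < (completeGraph (Fin 2) □ cycleGraph (2 * k + 1)).edist x y := by
    have hadj : (completeGraph (Fin 2)).Adj x.1 y.1 := by
      simp [hx, hy, completeGraph]
    have e1 : (completeGraph (Fin 2)).edist x.1 y.1 = 1 := edist_eq_one_iff_adj.mpr hadj
    have e2 : (k : ℕ∞) ≤ (cycleGraph (2 * k + 1)).edist x.2 y.2 := cycle_edist_ge hk
    have e3 := boxProd_edist_ge (G := completeGraph (Fin 2)) (H := cycleGraph (2 * k + 1)) x y
    rw [e1] at e3
    calc (k : ℕ∞) < 1 + k := by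
          rw [add_comm]
          exact ENat.lt_add_one_iff (ENat.coe_ne_top k) |>.mpr le_rfl
      _ ≤ 1 + (cycleGraph (2 * k + 1)).edist x.2 y.2 := add_le_add_right e2 1
      _ ≤ _ := e3
  apply IsGreatest.csSup_eq
  constructor
  · refine ⟨{x, y}, Finset.card_pair hxy, ?_⟩
    intro u hu v hv huv
    simp only [Finset.mem_insert, Finset.mem_singleton] at hu hv
    rcases hu with rfl | rfl <;> rcases hv with rfl | rfl
    · exact absurd rfl huv
    · exact hkey
    · rwa [SimpleGraph.edist_comm]
    · exact absurd rfl huv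
  · rintro n ⟨s, rfl, hs⟩
    by_contra h
    push_neg at h
    obtain ⟨u, hu, v, hv, huv, hfst⟩ :=
      Finset.exists_ne_map_eq_of_card_lt_of_maps_to (t := (Finset.univ : Finset (Fin 2)))
        (by simpa using h) (fun (a : Fin 2 × Fin (2 * k + 1)) _ => Finset.mem_univ a.1)
    have hlt := hs u hu v hv huv
    have hreach : (cycleGraph (2 * k + 1)).Reachable u.2 v.2 :=
      cycleGraph_connected.preconnected u.2 v.2
    have hle := boxProd_edist_right_le (G := completeGraph (Fin 2)) u.1 u.2 v.2 hreach
    have huu : u = (u.1, u.2) := rfl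
    have hvv : v = (u.1, v.2) := by
      rw [hfst]
    rw [huu, hvv] at hlt
    have := hlt.trans_le (hle.trans (cycle_edist_le_k hk u.2 v.2))
    exact absurd this (lt_irrefl _)

theorem kIndepNum_boxProd_K2_cycle (k : ℕ) (hk : 0 < k) :
    kIndepNum (completeGraph (Fin 2) □ cycleGraph (2 * k + 1)) k = 2 ∧
      2 = min (kIndepNum (completeGraph (Fin 2)) k * Fintype.card (Fin (2 * k + 1)))
              (kIndepNum (cycleGraph (2 * k + 1)) k * Fintype.card (Fin 2)) := by
  refine ⟨kIndepNum_box k hk, ?_⟩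
  rw [kIndepNum_K2 k hk, kIndepNum_cycle k hk, Fintype.card_fin, Fintype.card_fin]
  omega
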